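/- Let n ≥ 2 and let m_1, …, m_n be nonzero real numbers. Let 𝓜 be the (n−1)×(n−1) symmetric tridiagonal matrix with diagonal entries 𝓜_{ii} = 1/m_i + 1/m_{i+1} (1 ≤ i ≤ n−1) and off-diagonal entries 𝓜_{i,i−1} = 𝓜_{i−1,i} = −1/m_i (2 ≤ i ≤ n−1), all other entries zero. Then det 𝓜 = (m_1 + m_2 + ⋯ + m_n)/(m_1 m_2 ⋯ m_n). -/

import Mathlib

open Finset Matrix

private noncomputable def A (k : ℕ) (m : ℕ → ℝ) : Matrix (Fin k) (Fin k) ℝ :=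
  Matrix.of fun i j : Fin k =>
      if (i : ℕ) = (j : ℕ) then 1 / m ((i : ℕ) + 1) + 1 / m ((i : ℕ) + 2)
      else if (i : ℕ) = (j : ℕ) + 1 then -(1 / m ((i : ℕ) + 1))
      else if (j : ℕ) = (i : ℕ) + 1 then -(1 / m ((j : ℕ) + 1))
      else 0

private lemma A_rec (k : ℕ) (m : ℕ → ℝ) :
    (A (k+2) m).det = (1 / m 1 + 1 / m 2) * (A (k+1) (fun j => m (j+1))).det
      - (1 / m 2)^2 * (A k (fun j => m (j+2))).det := by
  rw [Matrix.det_succ_row_zero, Fin.sum_univ_succ, Fin.sum_univ_succ]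
  have tail : ∀ j : Fin k, A (k+2) m 0 j.succ.succ = 0 := by
    intro j
    simp [A, Fin.val_succ]
  have h00 : A (k+2) m 0 0 = 1/m 1 + 1/m 2 := by norm_num [A]
  have h01 : A (k+2) m 0 (0:Fin (k+1)).succ = -(1/m 2) := by norm_num [A]
  have hM0 : (A (k+2) m).submatrix Fin.succ (Fin.succAbove 0) = A (k+1) (fun j => m (j+1)) := by
    ext i j
    simp [A, Matrix.submatrix, Fin.succAbove_zero, Fin.val_succ]
  have hdetN : ((A (k+2) m).submatrix Fin.succ (Fin.succAbove (0:Fin (k+1)).succ)).det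
      = -(1/m 2) * (A k (fun j => m (j+2))).det := by
    rw [Matrix.det_succ_column_zero, Fin.sum_univ_succ]
    have t2 : ∀ i : Fin k,
        (A (k+2) m).submatrix Fin.succ (Fin.succAbove (0:Fin (k+1)).succ) i.succ 0 = 0 := by
      intro i
      simp [A, Matrix.submatrix, Fin.succAbove, Fin.lt_def, Fin.val_succ]
    have t0 : (A (k+2) m).submatrix Fin.succ (Fin.succAbove (0:Fin (k+1)).succ) 0 0
        = -(1/m 2) := by
      norm_num [A, Matrix.submatrix, Fin.succAbove, Fin.lt_def]
    have hM1 : ((A (k+2) m).submatrix Fin.succ (Fin.succAbove (0:Fin (k+1)).succ)).submatrix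
        (Fin.succAbove (0:Fin (k+1))) Fin.succ = A k (fun j => m (j+2)) := by
      ext i j
      simp [A, Matrix.submatrix, Fin.succAbove, Fin.lt_def, Fin.val_succ]
    simp only [t2, t0, hM1, mul_zero, zero_mul, mul_one, Finset.sum_const_zero, add_zero,
      Fin.val_zero, pow_zero, one_mul]
  rw [h00, h01, hM0, hdetN]
  simp only [tail, mul_zero, zero_mul, Finset.sum_const_zero, add_zero, Fin.val_zero,
    Fin.val_succ, pow_zero, one_mul, pow_succ]
  ring

private lemma icc_insert (a b : ℕ) (h : a ≤ b) :
    Finset.Icc a b = insert a (Finset.Icc (a+1) b) := by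
  ext x; simp [Finset.mem_Icc]; omega

private lemma shift_sum (f : ℕ → ℝ) (a b : ℕ) :
    ∑ i ∈ Finset.Icc (a+1) (b+1), f i = ∑ i ∈ Finset.Icc a b, f (i+1) := by
  rw [← Finset.map_add_right_Icc, Finset.sum_map]
  rfl

private lemma shift_prod (f : ℕ → ℝ) (a b : ℕ) :
    ∏ i ∈ Finset.Icc (a+1) (b+1), f i = ∏ i ∈ Finset.Icc a b, f (i+1) := by
  rw [← Finset.map_add_right_Icc, Finset.prod_map]
  rfl

private lemma mainL (k : ℕ) : ∀ m : ℕ → ℝ, (∀ i, 1 ≤ i → i ≤ k + 1 → m i ≠ 0) →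
    (A k m).det = (∑ j ∈ Finset.Icc 1 (k+1), m j) / ∏ j ∈ Finset.Icc 1 (k+1), m j := by
  induction k using Nat.strong_induction_on with
  | _ k ih =>
    match k with
    | 0 =>
      intro m hm
      simp [A, Matrix.det_fin_zero]
      rw [div_self (hm 1 le_rfl le_rfl)]
    | 1 =>
      intro m hm
      have h1 : m 1 ≠ 0 := hm 1 le_rfl (by omega)
      have h2 : m 2 ≠ 0 := hm 2 (by omega) le_rfl
      have hI : Finset.Icc 1 2 = {1, 2} := rfl
      rw [Matrix.det_fin_one, hI]
      norm_num [A]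
      field_simp
      ring
    | (k+2) =>
      intro m hm
      rw [A_rec, ih (k+1) (by omega) _ (fun i h1 h2 => hm (i+1) (by omega) (by omega)),
        ih k (by omega) _ (fun i h1 h2 => hm (i+2) (by omega) (by omega))]
      have e1 : ∑ j ∈ Finset.Icc 1 (k+1+1), m (j+1) = ∑ j ∈ Finset.Icc 2 (k+3), m j :=
        (shift_sum m 1 (k+2)).symm
      have e2 : ∏ j ∈ Finset.Icc 1 (k+1+1), m (j+1) = ∏ j ∈ Finset.Icc 2 (k+3), m j :=
        (shift_prod m 1 (k+2)).symm
      have e3 : ∑ j ∈ Finset.Icc 1 (k+1), m (j+2) = ∑ j ∈ Finset.Icc 3 (k+3), m j :=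
        calc ∑ j ∈ Finset.Icc 1 (k+1), m (j+2)
            = ∑ j ∈ Finset.Icc 2 (k+2), m (j+1) := (shift_sum (fun j => m (j+1)) 1 (k+1)).symm
          _ = ∑ j ∈ Finset.Icc 3 (k+3), m j := (shift_sum m 2 (k+2)).symm
      have e4 : ∏ j ∈ Finset.Icc 1 (k+1), m (j+2) = ∏ j ∈ Finset.Icc 3 (k+3), m j :=
        calc ∏ j ∈ Finset.Icc 1 (k+1), m (j+2)
            = ∏ j ∈ Finset.Icc 2 (k+2), m (j+1) := (shift_prod (fun j => m (j+1)) 1 (k+1)).symm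
          _ = ∏ j ∈ Finset.Icc 3 (k+3), m j := (shift_prod m 2 (k+2)).symm
      have i1 : Finset.Icc 1 (k+2+1) = insert 1 (insert 2 (Finset.Icc 3 (k+3))) := by
        ext x; simp [Finset.mem_Icc]; omega
      have i2 : Finset.Icc 2 (k+3) = insert 2 (Finset.Icc 3 (k+3)) := by
        ext x; simp [Finset.mem_Icc]; omega
      rw [e1, e2, e3, e4, i1, i2]
      have n1 : (1:ℕ) ∉ insert 2 (Finset.Icc 3 (k+3)) := by simp [Finset.mem_Icc]
      have n2 : (2:ℕ) ∉ Finset.Icc 3 (k+3) := by simp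
      rw [Finset.sum_insert n1, Finset.sum_insert n2, Finset.prod_insert n1,
        Finset.prod_insert n2]
      have h1 : m 1 ≠ 0 := hm 1 le_rfl (by omega)
      have h2 : m 2 ≠ 0 := hm 2 (by omega) (by omega)
      have hP : ∏ j ∈ Finset.Icc 3 (k+3), m j ≠ 0 :=
        Finset.prod_ne_zero_iff.mpr fun i hi => by
          rw [Finset.mem_Icc] at hi
          exact hm i (by omega) (by omega)
      field_simp
      ring

/-- **Determinant of the tridiagonal matrix `𝓜`.**  For nonzero `m_1, …, m_n`, the
`(n−1)×(n−1)` symmetric tridiagonal matrix with diagonal entries `1/m_i + 1/m_{i+1}`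
and off-diagonal entries `𝓜_{i,i−1} = 𝓜_{i−1,i} = −1/m_i` has determinant
`(m_1 + ⋯ + m_n)/(m_1 ⋯ m_n)`.  (Indices of the matrix are 0-based: the 0-based
index `i` corresponds to the 1-based index `i+1`.) -/
theorem stmt4 (n : ℕ) (hn : 2 ≤ n) (m : ℕ → ℝ)
    (hm : ∀ i, 1 ≤ i → i ≤ n → m i ≠ 0) :
    (Matrix.of fun i j : Fin (n - 1) =>
      if (i : ℕ) = (j : ℕ) then 1 / m ((i : ℕ) + 1) + 1 / m ((i : ℕ) + 2)
      else if (i : ℕ) = (j : ℕ) + 1 then -(1 / m ((i : ℕ) + 1))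
      else if (j : ℕ) = (i : ℕ) + 1 then -(1 / m ((j : ℕ) + 1))
      else 0).det
    = (∑ k ∈ Finset.Icc 1 n, m k) / ∏ k ∈ Finset.Icc 1 n, m k := by
  have h := mainL (n-1) m (by intro i h1 h2; exact hm i h1 (by omega))
  have hn1 : n - 1 + 1 = n := by omega
  rw [hn1] at h
  exact h
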